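/- Let u, v : ℝ³ × ℝ → ℂ be given by u = (x²+y²+z²−t²−1+2iz)/(x²+y²+z²−(t−i)²) and v = 2(x−iy)/(x²+y²+z²−(t−i)²). Then |u|² + |v|² = 1 at every point (x,y,z,t) ∈ ℝ³ × ℝ where the denominator x²+y²+z²−(t−i)² is nonzero; i.e., (u,v) maps ℝ³ (for each fixed time t) into the unit three-sphere S³ ⊂ ℂ². -/

import Mathlib

open Complex

/-- The time-dependent inverse stereographic projection
`(u,v)` lands on the unit three-sphere `|u|² + |v|² = 1`. -/
theorem stereographic_projection_lands_on_sphere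
    (x y z t : ℝ)
    (hD : ((x : ℂ) ^ 2 + (y : ℂ) ^ 2 + (z : ℂ) ^ 2 - ((t : ℂ) - Complex.I) ^ 2) ≠ 0) :
    ‖(((x : ℂ) ^ 2 + (y : ℂ) ^ 2 + (z : ℂ) ^ 2 - (t : ℂ) ^ 2 - 1 + 2 * Complex.I * (z : ℂ)) /
        ((x : ℂ) ^ 2 + (y : ℂ) ^ 2 + (z : ℂ) ^ 2 - ((t : ℂ) - Complex.I) ^ 2))‖ ^ 2 +
    ‖((2 * ((x : ℂ) - Complex.I * (y : ℂ))) /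
        ((x : ℂ) ^ 2 + (y : ℂ) ^ 2 + (z : ℂ) ^ 2 - ((t : ℂ) - Complex.I) ^ 2))‖ ^ 2 = 1 := by
  have hD' : Complex.normSq ((x : ℂ) ^ 2 + (y : ℂ) ^ 2 + (z : ℂ) ^ 2 - ((t : ℂ) - Complex.I) ^ 2)
      ≠ 0 := fun h => hD (Complex.normSq_eq_zero.mp h)
  have key : ∀ w : ℂ, ‖w‖ ^ 2 = Complex.normSq w := fun w => by
    rw [Complex.sq_norm]
  rw [key, key, map_div₀, map_div₀, ← add_div, div_eq_one_iff_eq hD']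
  simp only [Complex.normSq_apply, pow_two, Complex.mul_re, Complex.mul_im, Complex.add_re,
    Complex.add_im, Complex.sub_re, Complex.sub_im, Complex.ofReal_re, Complex.ofReal_im,
    Complex.I_re, Complex.I_im, Complex.one_re, Complex.one_im, Complex.re_ofNat,
    Complex.im_ofNat]
  ring
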